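/- Define matrices D_−^{(n)} of size 2^n-by-2^n over ℝ by the recurrence: D_−^{(0)} = [0] (the 1-by-1 zero matrix), and D_−^{(n+1)} = (1/2)·[[D_−^{(n)}, I],[0, D_−^{(n)}]] in 2-by-2 block form (upper-left and lower-right blocks D_−^{(n)}, upper-right block the 2^n-by-2^n identity, lower-left block zero, indices in the first half of Fin 2^{n+1} corresponding to the first block row/column). Then for every n ≥ 0, every 0 ≤ k < 2^n, and every x ∈ (0,1], Σ_{j=1}^∞ 2^{−j}·H_{n,k}((x + 2^{−j})·(1 − ε_j(x))) + ∫_0^x H_{n,k}(t) dt = Σ_{l=0}^{2^n−1} (D_−^{(n)})_{l,k} · H_{n,l}(x). In particular P_− = C_− + L maps each Haar scale subspace W_n = span{H_{n,l} : 0 ≤ l < 2^n} into itself, with matrix D_−^{(n)} in the basis (H_{n,l}). -/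

import Mathlib

open MeasureTheory Set Matrix

noncomputable section

/-- The `k`-th binary digit of `x ∈ (0,1]`: `ε_k(x) = (⌈2^k x⌉ − 1) mod 2`. -/
def eps (k : ℕ) (x : ℝ) : ℤ := (⌈(2 : ℝ) ^ k * x⌉ - 1) % 2

/-- Identification `Fin (2^n) ⊕ Fin (2^n) ≃ Fin (2^(n+1))` (first summand first). -/
def blockEquiv (n : ℕ) : Fin (2 ^ n) ⊕ Fin (2 ^ n) ≃ Fin (2 ^ (n + 1)) :=
  finSumFinEquiv.trans (finCongr (by rw [pow_succ]; omega))

/-- `D_−^{(0)} = [0]`, `D_−^{(n+1)} = (1/2)·[[D_−^{(n)}, I],[0, D_−^{(n)}]]`. -/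
def Dminus : (n : ℕ) → Matrix (Fin (2 ^ n)) (Fin (2 ^ n)) ℝ
  | 0 => 0
  | n + 1 => Matrix.reindex (blockEquiv n) (blockEquiv n)
      ((1 / 2 : ℝ) • Matrix.fromBlocks (Dminus n) 1 0 (Dminus n))

/-- The mother Haar function `H = χ_{(0,1/2]} − χ_{(1/2,1]}`. -/
def HaarH (x : ℝ) : ℝ :=
  Set.indicator (Set.Ioc 0 (1 / 2)) 1 x - Set.indicator (Set.Ioc (1 / 2) 1) 1 x

/-- `H_{n,k}(x) = 2^{n/2} H(2^n x − k)`. -/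
def HaarNK (n k : ℕ) (x : ℝ) : ℝ := Real.sqrt 2 ^ n * HaarH ((2 : ℝ) ^ n * x - k)



/-- weight -/
def w (j : ℕ) : ℝ := (2 : ℝ) ^ (-((j : ℤ) + 1))

lemma w_eq (j : ℕ) : w j = ((1:ℝ)/2) ^ (j + 1) := by
  have h : (-((j:ℤ)+1)) = -(((j+1 : ℕ)) : ℤ) := by push_cast; ring
  rw [w, h, _root_.zpow_neg, zpow_natCast, one_div, inv_pow]

lemma w_pos (j : ℕ) : 0 < w j := by rw [w_eq]; positivity

lemma w_zero : w 0 = 1/2 := by norm_num [w_eq]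

lemma two_mul_w (j : ℕ) : 2 * w (j + 1) = w j := by
  rw [w_eq, w_eq]; ring

lemma tsum_w : ∑' j : ℕ, w j = 1 := by
  have h : ∀ j : ℕ, w j = (1/2 : ℝ) * (1/2)^j := fun j => by rw [w_eq, pow_succ']
  rw [tsum_congr h, tsum_mul_left, tsum_geometric_of_lt_one (by norm_num) (by norm_num)]
  norm_num

lemma summable_w : Summable w := by
  refine ((summable_geometric_of_lt_one (by norm_num : (0:ℝ) ≤ 1/2)
    (by norm_num)).mul_left (1/2)).congr fun j => ?_
  rw [w_eq, pow_succ']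

lemma eps_zero_or_one (k : ℕ) (x : ℝ) : eps k x = 0 ∨ eps k x = 1 := by
  unfold eps; omega

lemma eps_nonneg (k : ℕ) (x : ℝ) : 0 ≤ eps k x := by unfold eps; omega

lemma eps_le_one (k : ℕ) (x : ℝ) : eps k x ≤ 1 := by unfold eps; omega

lemma eps_succ (j : ℕ) (x : ℝ) : eps (j + 1) x = eps j (2 * x) := by
  unfold eps
  norm_num [pow_succ]
  ring_nf

lemma eps_succ_right (j : ℕ) (x : ℝ) : eps (j + 2) x = eps (j + 1) (2 * x - 1) := by
  unfold eps
  set z : ℤ := 2^(j+1) with hz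
  have h1 : (2:ℝ) ^ (j+1) * (2*x - 1) = 2 ^ (j+2) * x - (z : ℝ) := by
    rw [hz]; push_cast; ring
  rw [h1, Int.ceil_sub_intCast]
  have h2 : z % 2 = 0 := by rw [hz, pow_succ]; omega
  omega

lemma eps_one_le_half {x : ℝ} (h0 : 0 < x) (h1 : x ≤ 1/2) : eps 1 x = 0 := by
  unfold eps
  have : ⌈(2:ℝ)^1 * x⌉ = 1 := by
    rw [Int.ceil_eq_iff]
    constructor <;> push_cast <;> nlinarith
  rw [this]; rfl

lemma eps_one_gt_half {x : ℝ} (h0 : 1/2 < x) (h1 : x ≤ 1) : eps 1 x = 1 := by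
  unfold eps
  have : ⌈(2:ℝ)^1 * x⌉ = 2 := by
    rw [Int.ceil_eq_iff]
    constructor <;> push_cast <;> nlinarith
  rw [this]; rfl

/-- key bound: if digit j+1 is 0 then x + 2^{-(j+1)} ≤ 1 -/
lemma add_w_le_one {x : ℝ} (j : ℕ) (h0 : 0 < x) (h1 : x ≤ 1) (he : eps (j + 1) x = 0) :
    x + w j ≤ 1 := by
  unfold eps at he
  set m := ⌈(2:ℝ)^(j+1) * x⌉ with hm
  have hp : (0:ℝ) < 2^(j+1) := by positivity
  have hub : m ≤ (2:ℤ)^(j+1) := by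
    rw [hm]
    refine Int.ceil_le.mpr ?_
    push_cast
    nlinarith
  have hpar : ((2:ℤ)^(j+1)) % 2 = 0 := by rw [pow_succ]; omega
  have hub' : m ≤ (2:ℤ)^(j+1) - 1 := by omega
  have hxm : (2:ℝ)^(j+1) * x ≤ (m : ℝ) := Int.le_ceil _
  have hmr : (m : ℝ) ≤ (2:ℝ)^(j+1) - 1 := by exact_mod_cast hub'
  have hw : w j = ((2:ℝ)^(j+1))⁻¹ := by rw [w_eq, one_div, inv_pow]
  rw [hw]
  have h6 : (2:ℝ)^(j+1) * (x + ((2:ℝ)^(j+1))⁻¹) ≤ 2^(j+1) * 1 := by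
    rw [mul_add, mul_inv_cancel₀ (ne_of_gt hp), mul_one]
    linarith
  exact le_of_mul_le_mul_left h6 hp

lemma summable_eps {x : ℝ} : Summable (fun j : ℕ => w j * (eps (j+1) x : ℝ)) := by
  refine Summable.of_nonneg_of_le (fun j => ?_) (fun j => ?_) summable_w
  · have := eps_nonneg (j+1) x
    have := (w_pos j).le
    have : (0:ℝ) ≤ (eps (j+1) x : ℝ) := by exact_mod_cast eps_nonneg (j+1) x
    positivity
  · have h1 : ((eps (j+1) x : ℝ)) ≤ 1 := by exact_mod_cast eps_le_one (j+1) x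
    nlinarith [w_pos j, eps_nonneg (j+1) x]

lemma partial_eps {x : ℝ} (h0 : 0 < x) (h1 : x ≤ 1) (N : ℕ) :
    ∑ j ∈ Finset.range N, w j * (eps (j+1) x : ℝ) = ((⌈(2:ℝ)^N * x⌉ : ℝ) - 1) / 2^N := by
  induction N with
  | zero =>
      simp only [Finset.range_zero, Finset.sum_empty, pow_zero, one_mul]
      have : ⌈x⌉ = 1 := by
        rw [Int.ceil_eq_iff] <;> push_cast <;> constructor <;> linarith
      rw [this]
      norm_num
  | succ N ih =>
      rw [Finset.sum_range_succ, ih]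
      set c := ⌈(2:ℝ)^(N+1) * x⌉ with hc
      set d := ⌈(2:ℝ)^N * x⌉ with hd
      have hyp : (0:ℝ) < 2^N := by positivity
      have h2N : (2:ℝ)^(N+1) = 2 * 2^N := by ring
      have hcd1 : c ≤ 2 * d := by
        rw [hc]
        refine Int.ceil_le.mpr ?_
        push_cast
        have := Int.le_ceil ((2:ℝ)^N * x)
        rw [← hd] at this
        rw [h2N]; nlinarith
      have hcd2 : 2 * d - 1 ≤ c := by
        have hlt : ((d:ℝ) - 1) < 2^N * x := by
          have := Int.ceil_lt_add_one ((2:ℝ)^N * x)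
          rw [← hd] at this
          linarith
        have : ((2*d - 2 : ℤ) : ℝ) < 2^(N+1) * x := by push_cast; rw [h2N]; nlinarith
        have h2 := Int.lt_ceil.mpr this
        rw [← hc] at h2
        omega
      have heps : eps (N+1) x = c - 2*d + 1 := by
        unfold eps
        rw [← hc]
        omega
      rw [heps]
      push_cast
      rw [w_eq, _root_.one_div_pow, pow_succ]
      field_simp
      ring

lemma tsum_eps {x : ℝ} (h0 : 0 < x) (h1 : x ≤ 1) :
    ∑' j : ℕ, w j * (eps (j+1) x : ℝ) = x := by
  have hs := summable_eps (x := x)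
  have htend := hs.hasSum.tendsto_sum_nat
  have hlow : ∀ N : ℕ, x - (1/2:ℝ)^N ≤ ∑ j ∈ Finset.range N, w j * (eps (j+1) x : ℝ) := by
    intro N
    rw [partial_eps h0 h1]
    have hp : (0:ℝ) < 2^N := by positivity
    have hc := Int.le_ceil ((2:ℝ)^N * x)
    have h2 : (1/2:ℝ)^N = ((2:ℝ)^N)⁻¹ := by rw [one_div, inv_pow]
    have h3 : ((2:ℝ)^N)⁻¹ * (2:ℝ)^N = 1 := inv_mul_cancel₀ (ne_of_gt hp)
    rw [h2, le_div_iff₀ hp]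
    nlinarith
  have hup : ∀ N : ℕ, ∑ j ∈ Finset.range N, w j * (eps (j+1) x : ℝ) ≤ x := by
    intro N
    rw [partial_eps h0 h1]
    have hp : (0:ℝ) < 2^N := by positivity
    have hc := Int.ceil_lt_add_one ((2:ℝ)^N * x)
    rw [div_le_iff₀ hp]
    nlinarith
  have hxlim : Filter.Tendsto (fun N : ℕ => x - (1/2:ℝ)^N) Filter.atTop (nhds x) := by
    have := (tendsto_pow_atTop_nhds_zero_of_lt_one (by norm_num : (0:ℝ) ≤ 1/2) (by norm_num)).const_sub x
    simpa using this
  have := tendsto_of_tendsto_of_tendsto_of_le_of_le hxlim tendsto_const_nhds hlow hup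
  exact tendsto_nhds_unique htend this



lemma HaarH_nonpos {y : ℝ} (h : y ≤ 0) : HaarH y = 0 := by
  unfold HaarH
  rw [Set.indicator_of_notMem, Set.indicator_of_notMem] <;> simp [Set.mem_Ioc] <;> intro h' <;> linarith

lemma HaarH_gt_one {y : ℝ} (h : 1 < y) : HaarH y = 0 := by
  unfold HaarH
  rw [Set.indicator_of_notMem, Set.indicator_of_notMem] <;> simp [Set.mem_Ioc] <;> intro h' <;> linarith

lemma abs_HaarH_le_one (y : ℝ) : |HaarH y| ≤ 1 := by
  unfold HaarH
  simp only [Set.indicator_apply]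
  split_ifs <;> norm_num

lemma HaarNK_nonpos (n k : ℕ) {y : ℝ} (h : y ≤ 0) : HaarNK n k y = 0 := by
  unfold HaarNK
  rw [HaarH_nonpos, mul_zero]
  have hp : (0:ℝ) < 2^n := by positivity
  have : (0:ℝ) ≤ (k:ℝ) := Nat.cast_nonneg k
  nlinarith

lemma HaarNK_zero (n k : ℕ) : HaarNK n k 0 = 0 := HaarNK_nonpos n k le_rfl

lemma HaarNK_gt_one {n k : ℕ} (hk : k < 2^n) {y : ℝ} (h : 1 < y) : HaarNK n k y = 0 := by
  unfold HaarNK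
  rw [HaarH_gt_one, mul_zero]
  have hk' : (k:ℝ) ≤ (2:ℝ)^n - 1 := by
    have : (k:ℝ) + 1 ≤ (2:ℝ)^n := by exact_mod_cast Nat.succ_le_of_lt hk
    linarith
  have hp : (0:ℝ) < 2^n := by positivity
  nlinarith

lemma abs_HaarNK_le (n k : ℕ) (y : ℝ) : |HaarNK n k y| ≤ Real.sqrt 2 ^ n := by
  unfold HaarNK
  rw [abs_mul, abs_pow, abs_of_nonneg (Real.sqrt_nonneg 2)]
  have h1 := abs_HaarH_le_one ((2:ℝ)^n * y - k)
  have h2 : (0:ℝ) ≤ Real.sqrt 2 ^ n := by positivity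
  nlinarith

lemma ind_intervalIntegrable (a b c d : ℝ) :
    IntervalIntegrable (Set.indicator (Set.Ioc a b) (1:ℝ → ℝ)) volume c d := by
  have : Integrable (Set.indicator (Set.Ioc a b) (1:ℝ → ℝ)) volume := by
    rw [integrable_indicator_iff measurableSet_Ioc]
    exact integrableOn_const measure_Ioc_lt_top.ne
  exact this.intervalIntegrable

lemma HaarNK_repr (n k : ℕ) : HaarNK n k = fun t => Real.sqrt 2 ^ n *
      (Set.indicator (Set.Ioc ((k:ℝ)/2^n) (((k:ℝ)+1/2)/2^n)) (1:ℝ → ℝ) t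
       - Set.indicator (Set.Ioc (((k:ℝ)+1/2)/2^n) (((k:ℝ)+1)/2^n)) (1:ℝ → ℝ) t) := by
  funext t
  have hp : (0:ℝ) < 2^n := by positivity
  unfold HaarNK HaarH
  congr 2
  · simp only [Set.indicator_apply, Set.mem_Ioc]
    refine if_congr ?_ rfl rfl
    constructor
    · rintro ⟨a, b⟩
      constructor
      · rw [div_lt_iff₀ hp]; nlinarith
      · rw [le_div_iff₀ hp]; nlinarith
    · rintro ⟨a, b⟩
      rw [div_lt_iff₀ hp] at a; rw [le_div_iff₀ hp] at b
      constructor <;> nlinarith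
  · simp only [Set.indicator_apply, Set.mem_Ioc]
    refine if_congr ?_ rfl rfl
    constructor
    · rintro ⟨a, b⟩
      constructor
      · rw [div_lt_iff₀ hp]; nlinarith
      · rw [le_div_iff₀ hp]; nlinarith
    · rintro ⟨a, b⟩
      rw [div_lt_iff₀ hp] at a; rw [le_div_iff₀ hp] at b
      constructor <;> nlinarith

lemma HaarNK_intervalIntegrable (n k : ℕ) (c d : ℝ) :
    IntervalIntegrable (HaarNK n k) volume c d := by
  rw [HaarNK_repr]
  exact ((ind_intervalIntegrable _ _ c d).sub (ind_intervalIntegrable _ _ c d)).const_mul _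

lemma integral_ind {a b u : ℝ} (h0 : 0 ≤ a) (hab : a ≤ b) (hu : b ≤ u) :
    ∫ t in (0:ℝ)..u, Set.indicator (Set.Ioc a b) (1:ℝ → ℝ) t = b - a := by
  have h0u : (0:ℝ) ≤ u := le_trans h0 (le_trans hab hu)
  rw [intervalIntegral.integral_of_le h0u, MeasureTheory.setIntegral_indicator measurableSet_Ioc]
  have hss : Set.Ioc (0:ℝ) u ∩ Set.Ioc a b = Set.Ioc a b :=
    Set.inter_eq_right.mpr (Set.Ioc_subset_Ioc h0 hu)
  rw [hss]
  simp [Real.volume_Ioc, ENNReal.toReal_ofReal (by linarith : (0:ℝ) ≤ b - a), hab]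

lemma integral_chi {x : ℝ} (h0 : 0 ≤ x) (h1 : x ≤ 1) :
    ∫ t in (0:ℝ)..x, Set.indicator (Set.Ioc (0:ℝ) 1) (1:ℝ → ℝ) t = x := by
  rw [intervalIntegral.integral_of_le h0, MeasureTheory.setIntegral_indicator measurableSet_Ioc]
  have hss : Set.Ioc (0:ℝ) x ∩ Set.Ioc (0:ℝ) 1 = Set.Ioc 0 x :=
    Set.inter_eq_left.mpr (Set.Ioc_subset_Ioc le_rfl h1)
  rw [hss]
  simp [Real.volume_Ioc, ENNReal.toReal_ofReal h0, h0]

lemma integral_HaarNK {n k : ℕ} (hk : k < 2^n) : ∫ t in (0:ℝ)..1, HaarNK n k t = 0 := by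
  rw [HaarNK_repr]
  have hp : (0:ℝ) < 2^n := by positivity
  have hk1 : (k:ℝ) + 1 ≤ 2^n := by exact_mod_cast Nat.succ_le_of_lt hk
  have h0 : (0:ℝ) ≤ (k:ℝ)/2^n := by positivity
  have h1 : (k:ℝ)/2^n ≤ ((k:ℝ)+1/2)/2^n := (div_le_div_iff_of_pos_right hp).mpr (by linarith)
  have h2 : ((k:ℝ)+1/2)/2^n ≤ ((k:ℝ)+1)/2^n := (div_le_div_iff_of_pos_right hp).mpr (by linarith)
  have h3 : ((k:ℝ)+1)/2^n ≤ 1 := (div_le_one hp).mpr hk1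
  have h0' : (0:ℝ) ≤ ((k:ℝ)+1/2)/2^n := le_trans h0 h1
  rw [intervalIntegral.integral_const_mul,
    intervalIntegral.integral_sub (ind_intervalIntegrable _ _ _ _) (ind_intervalIntegrable _ _ _ _),
    integral_ind h0 h1 (le_trans h2 h3), integral_ind h0' h2 h3]
  ring

lemma integral_eq_zero_of_Ioc {g : ℝ → ℝ} {a b : ℝ} (h : a ≤ b)
    (hg : ∀ t ∈ Set.Ioc a b, g t = 0) : ∫ t in a..b, g t = 0 := by
  rw [intervalIntegral.integral_of_le h]
  exact MeasureTheory.setIntegral_eq_zero_of_forall_eq_zero hg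

def trm (f : ℝ → ℝ) (x : ℝ) (j : ℕ) : ℝ := w j * f ((x + w j) * (1 - (eps (j+1) x : ℝ)))

def Cm (f : ℝ → ℝ) (x : ℝ) : ℝ := ∑' j : ℕ, trm f x j

def Tm (f : ℝ → ℝ) (x : ℝ) : ℝ := Cm f x + ∫ t in (0:ℝ)..x, f t

lemma summable_trm {f : ℝ → ℝ} {M : ℝ} (hM : ∀ y, |f y| ≤ M) (x : ℝ) :
    Summable (trm f x) := by
  refine Summable.of_norm ?_
  refine Summable.of_nonneg_of_le (fun j => norm_nonneg _) (fun j => ?_)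
    (summable_w.mul_left M)
  rw [Real.norm_eq_abs, trm, abs_mul, abs_of_nonneg (w_pos j).le]
  calc w j * |f _| ≤ w j * M := by nlinarith [w_pos j, abs_nonneg (f ((x + w j) * (1 - (eps (j+1) x : ℝ)))), hM ((x + w j) * (1 - (eps (j+1) x : ℝ)))]
    _ = M * w j := mul_comm _ _

lemma Tm_const_mul (c : ℝ) (f : ℝ → ℝ) (x : ℝ) :
    Tm (fun t => c * f t) x = c * Tm f x := by
  unfold Tm Cm
  rw [intervalIntegral.integral_const_mul]
  have h1 : ∑' j : ℕ, trm (fun t => c * f t) x j = c * ∑' j : ℕ, trm f x j := by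
    rw [← tsum_mul_left]
    exact tsum_congr fun j => by unfold trm; ring
  rw [h1]; ring

lemma Tm_sub {f g : ℝ → ℝ} {x : ℝ} (hf : Summable (trm f x)) (hg : Summable (trm g x))
    (hfi : IntervalIntegrable f volume 0 x) (hgi : IntervalIntegrable g volume 0 x) :
    Tm (fun t => f t - g t) x = Tm f x - Tm g x := by
  unfold Tm Cm
  rw [intervalIntegral.integral_sub hfi hgi]
  have h1 : ∑' j : ℕ, trm (fun t => f t - g t) x j
      = (∑' j : ℕ, trm f x j) - ∑' j : ℕ, trm g x j := by
    rw [← hf.tsum_sub hg]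
    exact tsum_congr fun j => by unfold trm; ring
  rw [h1]; ring

section Scaling

variable {g : ℝ → ℝ} {M : ℝ}

lemma Tm_left (hM : ∀ y, |g y| ≤ M) (hg0 : ∀ y, y ≤ 0 → g y = 0) (hg1 : ∀ y, 1 < y → g y = 0)
    {x : ℝ} (h0 : 0 < x) (h1 : x ≤ 1/2) :
    Tm (fun t => g (2*t)) x = 1/2 * Tm g (2*x) := by
  have hMf : ∀ y, |(fun t => g (2*t)) y| ≤ M := fun y => hM (2*y)
  have hsum : Summable (trm (fun t => g (2*t)) x) := summable_trm hMf x
  have he1 : eps 1 x = 0 := eps_one_le_half h0 h1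
  -- the series part
  have hC : Cm (fun t => g (2*t)) x = 1/2 * Cm g (2*x) := by
    unfold Cm
    rw [hsum.tsum_eq_zero_add]
    have ht0 : trm (fun t => g (2*t)) x 0 = 0 := by
      unfold trm
      rw [he1]
      push_cast
      rw [sub_zero, mul_one, w_zero]
      rw [hg1 (2*(x + 1/2)) (by linarith), mul_zero]
    rw [ht0, zero_add]
    have hterm : ∀ j : ℕ, trm (fun t => g (2*t)) x (j+1) = 1/2 * trm g (2*x) j := by
      intro j
      unfold trm
      rw [show eps (j+1+1) x = eps (j+1) (2*x) from eps_succ (j+1) x]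
      rcases eps_zero_or_one (j+1) (2*x) with he | he
      · rw [he]
        push_cast
        rw [sub_zero, mul_one, mul_one]
        rw [show 2*(x + w (j+1)) = 2*x + w j by rw [← two_mul_w j]; ring,
          show w (j+1) = 1/2 * w j by rw [← two_mul_w j]; ring]
        ring
      · rw [he]
        push_cast
        rw [sub_self, mul_zero]
        norm_num [hg0 0 le_rfl]
    rw [tsum_congr hterm, tsum_mul_left]
  have hI : ∫ t in (0:ℝ)..x, g (2*t) = 1/2 * ∫ t in (0:ℝ)..(2*x), g t := by
    rw [intervalIntegral.integral_comp_mul_left g (by norm_num : (2:ℝ) ≠ 0)]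
    norm_num
  unfold Tm
  rw [hC, hI]
  ring

lemma Tm_left' (hM : ∀ y, |g y| ≤ M) (hg0 : ∀ y, y ≤ 0 → g y = 0) (hg1 : ∀ y, 1 < y → g y = 0)
    (hgi : ∀ a b : ℝ, IntervalIntegrable g volume a b)
    {x : ℝ} (h0 : 1/2 < x) (h1 : x ≤ 1) :
    Tm (fun t => g (2*t)) x = 1/2 * ∫ t in (0:ℝ)..1, g t := by
  have he1 : eps 1 x = 1 := eps_one_gt_half h0 h1
  have hC : Cm (fun t => g (2*t)) x = 0 := by
    unfold Cm
    have hterm : ∀ j : ℕ, trm (fun t => g (2*t)) x j = 0 := by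
      intro j
      match j with
      | 0 =>
        unfold trm
        rw [he1]
        push_cast
        rw [sub_self, mul_zero]
        norm_num [hg0 0 le_rfl]
      | j + 1 =>
        unfold trm
        rw [show eps (j+1+1) x = eps (j+1) (2*x) from eps_succ (j+1) x]
        rcases eps_zero_or_one (j+1) (2*x) with he | he
        · rw [he]
          push_cast
          rw [sub_zero, mul_one]
          rw [show 2*(x + w (j+1)) = 2*x + w j by rw [← two_mul_w j]; ring]
          rw [hg1 (2*x + w j) (by nlinarith [w_pos j]), mul_zero]
        · rw [he]
          push_cast
          rw [sub_self, mul_zero]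
          norm_num [hg0 0 le_rfl]
    rw [tsum_congr hterm, tsum_zero]
  have hI : ∫ t in (0:ℝ)..x, g (2*t) = 1/2 * ∫ t in (0:ℝ)..1, g t := by
    rw [intervalIntegral.integral_comp_mul_left g (by norm_num : (2:ℝ) ≠ 0)]
    have hsplit : (∫ t in (0:ℝ)..1, g t) + (∫ t in (1:ℝ)..(2*x), g t)
        = ∫ t in (0:ℝ)..(2*x), g t :=
      intervalIntegral.integral_add_adjacent_intervals (hgi 0 1) (hgi 1 (2*x))
    have hz : (∫ t in (1:ℝ)..(2*x), g t) = 0 :=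
      integral_eq_zero_of_Ioc (by linarith) (fun t ht => hg1 t ht.1)
    rw [show (2:ℝ) * 0 = 0 by ring, ← hsplit, hz, add_zero, smul_eq_mul]
    ring
  unfold Tm
  rw [hC, hI, zero_add]

lemma Tm_right (hg0 : ∀ y, y ≤ 0 → g y = 0)
    {x : ℝ} (h0 : 0 < x) (h1 : x ≤ 1/2) :
    Tm (fun t => g (2*t - 1)) x = 1/2 * g (2*x) := by
  have he1 : eps 1 x = 0 := eps_one_le_half h0 h1
  have hC : Cm (fun t => g (2*t - 1)) x = 1/2 * g (2*x) := by
    unfold Cm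
    have hterm : ∀ j : ℕ, trm (fun t => g (2*t - 1)) x j
        = if j = 0 then 1/2 * g (2*x) else 0 := by
      intro j
      match j with
      | 0 =>
        simp only [if_pos]
        unfold trm
        rw [he1]
        push_cast
        rw [sub_zero, mul_one, w_zero]
        rw [show 2*(x + 1/2) - 1 = 2*x by ring]
      | j + 1 =>
        simp only [Nat.succ_ne_zero, if_false]
        unfold trm
        rw [show eps (j+1+1) x = eps (j+1) (2*x) from eps_succ (j+1) x]
        rcases eps_zero_or_one (j+1) (2*x) with he | he
        · rw [he]
          push_cast
          rw [sub_zero, mul_one]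
          have hb : 2*x + w j ≤ 1 := add_w_le_one j (by linarith) (by linarith) he
          rw [show 2*(x + w (j+1)) - 1 = (2*x + w j) - 1 by rw [← two_mul_w j]; ring]
          rw [hg0 _ (by linarith), mul_zero]
        · rw [he]
          push_cast
          rw [sub_self, mul_zero]
          norm_num [hg0 (-1:ℝ) (by norm_num)]
    rw [tsum_congr hterm]
    simp
  have hI : ∫ t in (0:ℝ)..x, g (2*t - 1) = 0 :=
    integral_eq_zero_of_Ioc h0.le (fun t ht => hg0 _ (by nlinarith [ht.2]))
  unfold Tm
  rw [hC, hI, add_zero]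

end Scaling

section Scaling2

variable {g : ℝ → ℝ} {M : ℝ}

lemma Tm_right' (hM : ∀ y, |g y| ≤ M) (hg0 : ∀ y, y ≤ 0 → g y = 0)
    (hgi : ∀ a b : ℝ, IntervalIntegrable g volume a b)
    {x : ℝ} (h0 : 1/2 < x) (h1 : x ≤ 1) :
    Tm (fun t => g (2*t - 1)) x = 1/2 * Tm g (2*x - 1) := by
  have hMf : ∀ y, |(fun t => g (2*t - 1)) y| ≤ M := fun y => hM (2*y - 1)
  have hsum : Summable (trm (fun t => g (2*t - 1)) x) := summable_trm hMf x
  have he1 : eps 1 x = 1 := eps_one_gt_half h0 h1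
  have hC : Cm (fun t => g (2*t - 1)) x = 1/2 * Cm g (2*x - 1) := by
    unfold Cm
    rw [hsum.tsum_eq_zero_add]
    have ht0 : trm (fun t => g (2*t - 1)) x 0 = 0 := by
      unfold trm
      rw [he1]
      push_cast
      rw [sub_self, mul_zero]
      norm_num [hg0 (-1:ℝ) (by norm_num)]
    rw [ht0, zero_add]
    have hterm : ∀ j : ℕ, trm (fun t => g (2*t - 1)) x (j+1) = 1/2 * trm g (2*x - 1) j := by
      intro j
      unfold trm
      rw [show eps (j+1+1) x = eps (j+1) (2*x - 1) from eps_succ_right j x]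
      rcases eps_zero_or_one (j+1) (2*x - 1) with he | he
      · rw [he]
        push_cast
        rw [sub_zero, mul_one, mul_one]
        rw [show 2*(x + w (j+1)) - 1 = 2*x - 1 + w j by rw [← two_mul_w j]; ring,
          show w (j+1) = 1/2 * w j by rw [← two_mul_w j]; ring]
        ring
      · rw [he]
        push_cast
        rw [sub_self, mul_zero, mul_zero]
        norm_num [hg0 (-1:ℝ) (by norm_num), hg0 0 le_rfl]
    rw [tsum_congr hterm, tsum_mul_left]
  have hI : ∫ t in (0:ℝ)..x, g (2*t - 1) = 1/2 * ∫ t in (0:ℝ)..(2*x - 1), g t := by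
    have : ∀ t : ℝ, g (2*t - 1) = g (2*t + (-1)) := fun t => by ring_nf
    rw [intervalIntegral.integral_congr (fun t _ => this t),
      intervalIntegral.integral_comp_mul_add g (by norm_num : (2:ℝ) ≠ 0) (-1)]
    have hsplit : (∫ t in (2*(0:ℝ) + (-1))..(0:ℝ), g t) + (∫ t in (0:ℝ)..(2*x + (-1)), g t)
        = ∫ t in (2*(0:ℝ) + (-1))..(2*x + (-1)), g t :=
      intervalIntegral.integral_add_adjacent_intervals (hgi _ _) (hgi _ _)
    have hz : (∫ t in (2*(0:ℝ) + (-1))..(0:ℝ), g t) = 0 :=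
      integral_eq_zero_of_Ioc (by norm_num) (fun t ht => hg0 t ht.2)
    rw [← hsplit, hz, zero_add, smul_eq_mul,
      show (2:ℝ)*x + (-1) = 2*x - 1 by ring]
    ring
  unfold Tm
  rw [hC, hI]
  ring

end Scaling2

def chi : ℝ → ℝ := Set.indicator (Set.Ioc (0:ℝ) 1) (1:ℝ → ℝ)

lemma chi_abs_le (y : ℝ) : |chi y| ≤ 1 := by
  unfold chi
  simp only [Set.indicator_apply]
  split_ifs <;> norm_num

lemma chi_nonpos {y : ℝ} (h : y ≤ 0) : chi y = 0 :=
  Set.indicator_of_notMem (fun hy => absurd hy.1 (not_lt.mpr h)) _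

lemma chi_gt_one {y : ℝ} (h : 1 < y) : chi y = 0 :=
  Set.indicator_of_notMem (fun hy => absurd hy.2 (not_le.mpr h)) _

lemma chi_mem {y : ℝ} (h0 : 0 < y) (h1 : y ≤ 1) : chi y = 1 :=
  Set.indicator_of_mem (Set.mem_Ioc.mpr ⟨h0, h1⟩) _

lemma chi_intervalIntegrable (a b : ℝ) : IntervalIntegrable chi volume a b :=
  ind_intervalIntegrable 0 1 a b

lemma Tm_chi {x : ℝ} (h0 : 0 < x) (h1 : x ≤ 1) : Tm chi x = 1 := by
  have hC : Cm chi x = 1 - x := by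
    unfold Cm
    have hterm : ∀ j : ℕ, trm chi x j = w j - w j * (eps (j+1) x : ℝ) := by
      intro j
      unfold trm
      rcases eps_zero_or_one (j+1) x with he | he
      · rw [he]
        push_cast
        rw [sub_zero, mul_one, chi_mem (by nlinarith [w_pos j]) (add_w_le_one j h0 h1 he)]
        ring
      · rw [he]
        push_cast
        rw [sub_self, mul_zero, chi_nonpos le_rfl]
        ring
    rw [tsum_congr hterm, summable_w.tsum_sub summable_eps, tsum_w, tsum_eps h0 h1]
  unfold Tm
  rw [hC, show (∫ t in (0:ℝ)..x, chi t) = x from integral_chi h0.le h1]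
  ring

lemma HaarH_eq_chi : HaarH = fun t => chi (2*t) - chi (2*t - 1) := by
  funext t
  unfold HaarH chi
  simp only [Set.indicator_apply, Set.mem_Ioc]
  congr 1
  · refine if_congr ?_ rfl rfl
    constructor
    · rintro ⟨a, b⟩; constructor <;> linarith
    · rintro ⟨a, b⟩; constructor <;> linarith
  · refine if_congr ?_ rfl rfl
    constructor
    · rintro ⟨a, b⟩; constructor <;> linarith
    · rintro ⟨a, b⟩; constructor <;> linarith

lemma chi_double_eq : (fun t => chi (2*t)) = Set.indicator (Set.Ioc (0:ℝ) (1/2)) (1:ℝ → ℝ) := by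
  funext t
  unfold chi
  simp only [Set.indicator_apply, Set.mem_Ioc]
  refine if_congr ?_ rfl rfl
  constructor
  · rintro ⟨a, b⟩; constructor <;> linarith
  · rintro ⟨a, b⟩; constructor <;> linarith

lemma chi_double_shift_eq :
    (fun t => chi (2*t - 1)) = Set.indicator (Set.Ioc (1/2:ℝ) 1) (1:ℝ → ℝ) := by
  funext t
  unfold chi
  simp only [Set.indicator_apply, Set.mem_Ioc]
  refine if_congr ?_ rfl rfl
  constructor
  · rintro ⟨a, b⟩; constructor <;> linarith
  · rintro ⟨a, b⟩; constructor <;> linarith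

lemma Tm_HaarH {x : ℝ} (h0 : 0 < x) (h1 : x ≤ 1) : Tm HaarH x = 0 := by
  rw [HaarH_eq_chi]
  have hsub : Tm (fun t => (fun s => chi (2*s)) t - (fun s => chi (2*s - 1)) t) x
      = Tm (fun t => chi (2*t)) x - Tm (fun t => chi (2*t - 1)) x := by
    refine Tm_sub (summable_trm (fun y => chi_abs_le (2*y)) x)
      (summable_trm (fun y => chi_abs_le (2*y - 1)) x) ?_ ?_
    · rw [chi_double_eq]; exact ind_intervalIntegrable _ _ _ _
    · rw [chi_double_shift_eq]; exact ind_intervalIntegrable _ _ _ _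
  rw [show (fun t => chi (2*t) - chi (2*t - 1))
      = fun t => (fun s => chi (2*s)) t - (fun s => chi (2*s - 1)) t from rfl, hsub]
  rcases le_or_gt x (1/2) with hc | hc
  · rw [Tm_left chi_abs_le (fun y hy => chi_nonpos hy) (fun y hy => chi_gt_one hy) h0 hc,
      Tm_right (fun y hy => chi_nonpos hy) h0 hc,
      Tm_chi (by linarith) (by linarith), chi_mem (by linarith) (by linarith)]
    ring
  · rw [Tm_left' chi_abs_le (fun y hy => chi_nonpos hy) (fun y hy => chi_gt_one hy)
      chi_intervalIntegrable hc h1,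
      Tm_right' chi_abs_le (fun y hy => chi_nonpos hy) chi_intervalIntegrable hc h1,
      Tm_chi (by linarith) (by linarith),
      show (∫ t in (0:ℝ)..1, chi t) = 1 from integral_chi (by norm_num) (by norm_num)]
    ring



lemma blockEquiv_inl (n : ℕ) (l : Fin (2^n)) :
    ((blockEquiv n (Sum.inl l) : Fin (2^(n+1))) : ℕ) = (l : ℕ) := by
  simp [blockEquiv]

lemma blockEquiv_inr (n : ℕ) (l : Fin (2^n)) :
    ((blockEquiv n (Sum.inr l) : Fin (2^(n+1))) : ℕ) = 2^n + (l : ℕ) := by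
  simp [blockEquiv]
  omega

lemma Dminus_inl_inl (n : ℕ) (l k : Fin (2^n)) :
    Dminus (n+1) (blockEquiv n (Sum.inl l)) (blockEquiv n (Sum.inl k)) = 1/2 * Dminus n l k := by
  simp [Dminus, Matrix.reindex_apply, Matrix.fromBlocks_apply₁₁]

lemma Dminus_inr_inl (n : ℕ) (l k : Fin (2^n)) :
    Dminus (n+1) (blockEquiv n (Sum.inr l)) (blockEquiv n (Sum.inl k)) = 0 := by
  simp [Dminus, Matrix.reindex_apply, Matrix.fromBlocks_apply₂₁]

lemma Dminus_inl_inr (n : ℕ) (l k : Fin (2^n)) :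
    Dminus (n+1) (blockEquiv n (Sum.inl l)) (blockEquiv n (Sum.inr k))
      = 1/2 * if l = k then 1 else 0 := by
  simp [Dminus, Matrix.reindex_apply, Matrix.fromBlocks_apply₁₂, Matrix.one_apply]

lemma Dminus_inr_inr (n : ℕ) (l k : Fin (2^n)) :
    Dminus (n+1) (blockEquiv n (Sum.inr l)) (blockEquiv n (Sum.inr k)) = 1/2 * Dminus n l k := by
  simp [Dminus, Matrix.reindex_apply, Matrix.fromBlocks_apply₂₂]

lemma HaarNK_double (n k : ℕ) (t : ℝ) :
    HaarNK (n+1) k t = Real.sqrt 2 * HaarNK n k (2*t) := by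
  unfold HaarNK
  rw [show (2:ℝ)^(n+1)*t - (k:ℝ) = 2^n*(2*t) - k by ring, pow_succ]
  ring

lemma HaarNK_shift (n k : ℕ) (t : ℝ) :
    HaarNK (n+1) (2^n + k) t = Real.sqrt 2 * HaarNK n k (2*t - 1) := by
  unfold HaarNK
  rw [show (2:ℝ)^(n+1)*t - ((2^n + k : ℕ) : ℝ) = 2^n*(2*t - 1) - k by push_cast; ring, pow_succ]
  ring

theorem key : ∀ n : ℕ, ∀ k : Fin (2^n), ∀ x : ℝ, 0 < x → x ≤ 1 →
    Tm (HaarNK n k) x = ∑ l : Fin (2^n), Dminus n l k * HaarNK n l x := by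
  intro n
  induction n with
  | zero =>
    intro k x h0 h1
    have hk : (k : ℕ) = 0 := by omega
    have hfun : HaarNK 0 (k : ℕ) = HaarH := by
      funext t
      unfold HaarNK
      rw [hk]
      norm_num
    rw [hfun, Tm_HaarH h0 h1]
    simp [Dminus]
  | succ n ih =>
    intro k x h0 h1
    obtain ⟨s, rfl⟩ : ∃ s, k = blockEquiv n s :=
      ⟨(blockEquiv n).symm k, ((blockEquiv n).apply_symm_apply k).symm⟩
    -- rewrite the RHS sum over the block decomposition
    rw [← Equiv.sum_comp (blockEquiv n)
      (fun l => Dminus (n+1) l (blockEquiv n s) * HaarNK (n+1) (l : ℕ) x), Fintype.sum_sum_type]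
    cases s with
    | inl k' =>
      -- left block: H_{n+1,k'} = √2 H_{n,k'}(2t)
      have hfun : HaarNK (n+1) ((blockEquiv n (Sum.inl k') : Fin (2^(n+1))) : ℕ)
          = fun t => Real.sqrt 2 * HaarNK n (k' : ℕ) (2*t) := by
        funext t
        rw [blockEquiv_inl, HaarNK_double]
      rw [hfun, Tm_const_mul]
      have hM := abs_HaarNK_le n (k' : ℕ)
      have hg0 : ∀ y : ℝ, y ≤ 0 → HaarNK n (k' : ℕ) y = 0 := fun y hy => HaarNK_nonpos n _ hy
      have hg1 : ∀ y : ℝ, 1 < y → HaarNK n (k' : ℕ) y = 0 := fun y hy =>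
        HaarNK_gt_one k'.isLt hy
      rcases le_or_gt x (1/2) with hc | hc
      · rw [Tm_left hM hg0 hg1 h0 hc, ih k' (2*x) (by linarith) (by linarith)]
        rw [Finset.mul_sum, Finset.mul_sum]
        have hzero : ∀ l : Fin (2^n),
            Dminus (n+1) (blockEquiv n (Sum.inr l)) (blockEquiv n (Sum.inl k'))
              * HaarNK (n+1) ((blockEquiv n (Sum.inr l) : Fin (2^(n+1))) : ℕ) x = 0 := by
          intro l
          rw [Dminus_inr_inl, zero_mul]
        rw [Finset.sum_congr rfl (fun l _ => hzero l), Finset.sum_const_zero, add_zero]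
        refine Finset.sum_congr rfl (fun l _ => ?_)
        rw [Dminus_inl_inl, show HaarNK (n+1) ((blockEquiv n (Sum.inl l) : Fin (2^(n+1))) : ℕ) x
          = Real.sqrt 2 * HaarNK n (l : ℕ) (2*x) from by rw [blockEquiv_inl, HaarNK_double]]
        ring
      · rw [Tm_left' hM hg0 hg1 (fun a b => HaarNK_intervalIntegrable n _ a b) hc h1,
          integral_HaarNK k'.isLt]
        have hzero1 : ∀ l : Fin (2^n),
            Dminus (n+1) (blockEquiv n (Sum.inl l)) (blockEquiv n (Sum.inl k'))
              * HaarNK (n+1) ((blockEquiv n (Sum.inl l) : Fin (2^(n+1))) : ℕ) x = 0 := by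
          intro l
          rw [show HaarNK (n+1) ((blockEquiv n (Sum.inl l) : Fin (2^(n+1))) : ℕ) x
            = Real.sqrt 2 * HaarNK n (l : ℕ) (2*x) from by rw [blockEquiv_inl, HaarNK_double],
            HaarNK_gt_one l.isLt (by linarith), mul_zero, mul_zero]
        have hzero2 : ∀ l : Fin (2^n),
            Dminus (n+1) (blockEquiv n (Sum.inr l)) (blockEquiv n (Sum.inl k'))
              * HaarNK (n+1) ((blockEquiv n (Sum.inr l) : Fin (2^(n+1))) : ℕ) x = 0 := by
          intro l
          rw [Dminus_inr_inl, zero_mul]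
        rw [Finset.sum_congr rfl (fun l _ => hzero1 l),
          Finset.sum_congr rfl (fun l _ => hzero2 l)]
        simp
    | inr k' =>
      have hfun : HaarNK (n+1) ((blockEquiv n (Sum.inr k') : Fin (2^(n+1))) : ℕ)
          = fun t => Real.sqrt 2 * HaarNK n (k' : ℕ) (2*t - 1) := by
        funext t
        rw [blockEquiv_inr, HaarNK_shift]
      rw [hfun, Tm_const_mul]
      have hM := abs_HaarNK_le n (k' : ℕ)
      have hg0 : ∀ y : ℝ, y ≤ 0 → HaarNK n (k' : ℕ) y = 0 := fun y hy => HaarNK_nonpos n _ hy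
      rcases le_or_gt x (1/2) with hc | hc
      · rw [Tm_right hg0 h0 hc]
        have hzero : ∀ l : Fin (2^n),
            Dminus (n+1) (blockEquiv n (Sum.inr l)) (blockEquiv n (Sum.inr k'))
              * HaarNK (n+1) ((blockEquiv n (Sum.inr l) : Fin (2^(n+1))) : ℕ) x = 0 := by
          intro l
          rw [show HaarNK (n+1) ((blockEquiv n (Sum.inr l) : Fin (2^(n+1))) : ℕ) x
            = Real.sqrt 2 * HaarNK n (l : ℕ) (2*x - 1) from by rw [blockEquiv_inr, HaarNK_shift],
            HaarNK_nonpos n _ (by linarith), mul_zero, mul_zero]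
        rw [Finset.sum_congr rfl (fun l _ => hzero l), Finset.sum_const_zero, add_zero]
        have hterm : ∀ l : Fin (2^n),
            Dminus (n+1) (blockEquiv n (Sum.inl l)) (blockEquiv n (Sum.inr k'))
              * HaarNK (n+1) ((blockEquiv n (Sum.inl l) : Fin (2^(n+1))) : ℕ) x
            = (if l = k' then (1:ℝ) else 0) * (1/2 * (Real.sqrt 2 * HaarNK n (l : ℕ) (2*x))) := by
          intro l
          rw [Dminus_inl_inr, show HaarNK (n+1) ((blockEquiv n (Sum.inl l) : Fin (2^(n+1))) : ℕ) x
            = Real.sqrt 2 * HaarNK n (l : ℕ) (2*x) from by rw [blockEquiv_inl, HaarNK_double]]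
          ring
        rw [Finset.sum_congr rfl (fun l _ => hterm l)]
        simp only [ite_mul, one_mul, zero_mul, Finset.sum_ite_eq', Finset.mem_univ, if_true]
        ring
      · rw [Tm_right' hM hg0 (fun a b => HaarNK_intervalIntegrable n _ a b) hc h1,
          ih k' (2*x - 1) (by linarith) (by linarith)]
        have hzero : ∀ l : Fin (2^n),
            Dminus (n+1) (blockEquiv n (Sum.inl l)) (blockEquiv n (Sum.inr k'))
              * HaarNK (n+1) ((blockEquiv n (Sum.inl l) : Fin (2^(n+1))) : ℕ) x = 0 := by
          intro l
          rw [show HaarNK (n+1) ((blockEquiv n (Sum.inl l) : Fin (2^(n+1))) : ℕ) x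
            = Real.sqrt 2 * HaarNK n (l : ℕ) (2*x) from by rw [blockEquiv_inl, HaarNK_double],
            HaarNK_gt_one l.isLt (by linarith), mul_zero, mul_zero]
        rw [Finset.sum_congr rfl (fun l _ => hzero l), Finset.sum_const_zero, zero_add]
        rw [Finset.mul_sum, Finset.mul_sum]
        refine Finset.sum_congr rfl (fun l _ => ?_)
        rw [Dminus_inr_inr, show HaarNK (n+1) ((blockEquiv n (Sum.inr l) : Fin (2^(n+1))) : ℕ) x
          = Real.sqrt 2 * HaarNK n (l : ℕ) (2*x - 1) from by rw [blockEquiv_inr, HaarNK_shift]]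
        ring

/-- `P_−[H_{n,k}] = C_−[H_{n,k}] + L[H_{n,k}] = Σ_l (D_−^{(n)})_{l,k} H_{n,l}` pointwise on
`(0,1]`: the operator `P_− = C_− + L` maps each Haar scale subspace `W_n` into itself,
with matrix `D_−^{(n)}`. -/
theorem stmt9 (n : ℕ) (k : Fin (2 ^ n)) (x : ℝ) (hx : x ∈ Set.Ioc (0 : ℝ) 1) :
    (∑' j : ℕ, (2 : ℝ) ^ (-((j : ℤ) + 1)) *
        HaarNK n k ((x + (2 : ℝ) ^ (-((j : ℤ) + 1))) * (1 - (eps (j + 1) x : ℝ)))) +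
      (∫ t in (0 : ℝ)..x, HaarNK n k t) =
      ∑ l : Fin (2 ^ n), Dminus n l k * HaarNK n l x :=
  key n k x hx.1 hx.2
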